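/- Assume that a^V_{k0} > 0 and a^V_{k1} > 0 for all k = 1,…,K (no separation in the validation set), and that min(a_{k0}, a_{k1}) = 0 with max(a_{k0}, a_{k1}) = a_{k•} > 0 for all k = 1,…,K (complete separation in the original data). Then there exists δ > 0 such that PE^V(λ) < PE^V(0) for all λ ∈ (0, δ); in particular the validation squared prediction error PE^V is not minimized at λ = 0. -/

import Mathlib

lemma term_lt (A B n l : ℝ) (hA : 1 ≤ A) (hB : 1 ≤ B) (hn : 1 ≤ n) (hl : 0 < l)
    (h : 2 * l * A < 1) :
    A * (2 * l / (n + 4 * l)) ^ 2 + B * (1 - 2 * l / (n + 4 * l)) ^ 2 < B := by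
  have hd : 0 < n + 4 * l := by linarith
  set p := 2 * l / (n + 4 * l) with hp
  have hp0 : 0 < p := div_pos (by linarith) hd
  have hp1 : p < 1 := by rw [hp, div_lt_one hd]; linarith
  have hple : p ≤ 2 * l := by rw [hp, div_le_iff₀ hd]; nlinarith
  have hAp : A * p < 1 := by nlinarith
  nlinarith [mul_pos hp0 hp0, mul_pos hp0 (mul_pos hp0 (lt_of_lt_of_le one_pos hB))]

/-- Validation squared prediction error: training counts `a0, a1`, validation counts
`av0, av1`, ridge probability estimate `π̂_k(λ) = (a_{k1} + 2λ)/(a_{k•} + 4λ)`. -/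
noncomputable def validPE (K : ℕ) (a0 a1 av0 av1 : Fin K → ℕ) (l : ℝ) : ℝ :=
  (1 / ∑ k : Fin K, ((av0 k : ℝ) + (av1 k : ℝ))) *
    ∑ k : Fin K,
      ((av0 k : ℝ) *
          (((a1 k : ℝ) + 2 * l) / ((a0 k : ℝ) + (a1 k : ℝ) + 4 * l)) ^ 2 +
       (av1 k : ℝ) *
          (1 - ((a1 k : ℝ) + 2 * l) / ((a0 k : ℝ) + (a1 k : ℝ) + 4 * l)) ^ 2)

/-- No separation in the validation set and complete separation in the original data:
the validation squared prediction error is strictly below its value at `0` on some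
right-neighborhood of `0`; in particular it is not minimized at `λ = 0`. -/
theorem stmt17 (K : ℕ) (hK : 1 ≤ K) (a0 a1 av0 av1 : Fin K → ℕ)
    (hv : ∀ k, 0 < av0 k ∧ 0 < av1 k)
    (hs : ∀ k, min (a0 k) (a1 k) = 0 ∧ max (a0 k) (a1 k) = a0 k + a1 k ∧
      0 < a0 k + a1 k) :
    (∃ δ : ℝ, 0 < δ ∧ ∀ l : ℝ, 0 < l → l < δ →
      validPE K a0 a1 av0 av1 l < validPE K a0 a1 av0 av1 0) ∧
    ¬ (∀ l : ℝ, 0 ≤ l →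
        validPE K a0 a1 av0 av1 0 ≤ validPE K a0 a1 av0 av1 l) := by
  set T : ℝ := ∑ k : Fin K, ((av0 k : ℝ) + (av1 k : ℝ)) with hT
  have hne : (Finset.univ : Finset (Fin K)).Nonempty := ⟨⟨0, hK⟩, Finset.mem_univ _⟩
  have hbound : ∀ k : Fin K, (av0 k : ℝ) + (av1 k : ℝ) ≤ T := by
    intro k
    apply Finset.single_le_sum (f := fun k => (av0 k : ℝ) + (av1 k : ℝ))
      (fun i _ => by positivity) (Finset.mem_univ k)
  have hT2 : (2 : ℝ) ≤ T := by
    obtain ⟨k, -⟩ := hne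
    refine le_trans ?_ (hbound k)
    have h0 : (1:ℝ) ≤ av0 k := by exact_mod_cast (hv k).1
    have h1 : (1:ℝ) ≤ av1 k := by exact_mod_cast (hv k).2
    linarith
  have hTpos : 0 < T := by linarith
  have key : ∀ l : ℝ, 0 < l → l < 1 / (2 * (T + 1)) →
      validPE K a0 a1 av0 av1 l < validPE K a0 a1 av0 av1 0 := by
    intro l hl hld
    unfold validPE
    rw [← hT]
    apply mul_lt_mul_of_pos_left _ (by positivity)
    apply Finset.sum_lt_sum_of_nonempty hne
    intro k _
    have hA : (1:ℝ) ≤ av0 k := by exact_mod_cast (hv k).1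
    have hB : (1:ℝ) ≤ av1 k := by exact_mod_cast (hv k).2
    have hAT : (av0 k : ℝ) ≤ T := by have := hbound k; linarith
    have hBT : (av1 k : ℝ) ≤ T := by have := hbound k; linarith
    have hsmallA : 2 * l * (av0 k : ℝ) < 1 := by
      have h1 : 2 * l * (av0 k : ℝ) ≤ 2 * l * T := by nlinarith
      have h2 : 2 * l * T < 2 * (1 / (2 * (T + 1))) * T := by
        apply mul_lt_mul_of_pos_right _ hTpos
        linarith
      have h3 : 2 * (1 / (2 * (T + 1))) * T < 1 := by
        have e : 2 * (1 / (2 * (T + 1))) * T = T / (T + 1) := by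
          field_simp
        rw [e, div_lt_one (by linarith)]
        linarith
      linarith
    have hsmallB : 2 * l * (av1 k : ℝ) < 1 := by
      have h1 : 2 * l * (av1 k : ℝ) ≤ 2 * l * T := by nlinarith
      have h2 : 2 * l * T < 2 * (1 / (2 * (T + 1))) * T := by
        apply mul_lt_mul_of_pos_right _ hTpos
        linarith
      have h3 : 2 * (1 / (2 * (T + 1))) * T < 1 := by
        have e : 2 * (1 / (2 * (T + 1))) * T = T / (T + 1) := by
          field_simp
        rw [e, div_lt_one (by linarith)]
        linarith
      linarith
    obtain ⟨hmin, -, hpos⟩ := hs k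
    rcases Nat.min_eq_zero_iff.mp hmin with h0 | h1
    · -- a0 k = 0, so a1 k ≥ 1
      have hn : (1:ℝ) ≤ (a1 k : ℝ) := by
        have : 0 < a1 k := by omega
        exact_mod_cast this
      rw [h0]
      push_cast [h0]
      have hd : (0:ℝ) < (a1 k : ℝ) + 4 * l := by linarith
      have hd0 : ((a1 k : ℝ)) ≠ 0 := by linarith
      have e0 : ((a1 k : ℝ) + 2 * 0) / (0 + (a1 k : ℝ) + 4 * 0) = 1 := by
        field_simp; ring
      have e1 : ((a1 k : ℝ) + 2 * l) / (0 + (a1 k : ℝ) + 4 * l)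
          = 1 - 2 * l / ((a1 k : ℝ) + 4 * l) := by
        field_simp
        ring
      rw [e0, e1]
      have := term_lt (av1 k : ℝ) (av0 k : ℝ) (a1 k : ℝ) l hB hA hn hl hsmallB
      have e2 : (1 : ℝ) - (1 - 2 * l / ((a1 k : ℝ) + 4 * l)) = 2 * l / ((a1 k : ℝ) + 4 * l) := by
        ring
      linarith [this]
      -- goal: av0 * (1 - p)^2 + av1 * p^2 < av0 * 1^2 + av1 * (1-1)^2 = av0
    · -- a1 k = 0, a0 k ≥ 1
      have hn : (1:ℝ) ≤ (a0 k : ℝ) := by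
        have : 0 < a0 k := by omega
        exact_mod_cast this
      rw [h1]
      push_cast [h1]
      have e0 : ((0:ℝ) + 2 * 0) / ((a0 k : ℝ) + 0 + 4 * 0) = 0 := by simp
      have e1 : ((0:ℝ) + 2 * l) / ((a0 k : ℝ) + 0 + 4 * l)
          = 2 * l / ((a0 k : ℝ) + 4 * l) := by ring_nf
      rw [e0, e1]
      have := term_lt (av0 k : ℝ) (av1 k : ℝ) (a0 k : ℝ) l hA hB hn hl hsmallA
      linarith [this]
  constructor
  · exact ⟨1 / (2 * (T + 1)), by positivity, key⟩
  · intro h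
    have hδ : 0 < 1 / (2 * (T + 1)) := by positivity
    have h1 := key (1 / (2 * (T + 1)) / 2) (by positivity) (by linarith)
    have h2 := h (1 / (2 * (T + 1)) / 2) (by positivity)
    linarith
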